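/- Let |ψ_λ⟩ = Σ_{n=1}^N √λ_n |nn⟩ be a unit vector in ℂ^N ⊗ ℂ^N with λ a probability vector. Then the maximum over all pairs of unitaries U, V of ∏_{j=1}^N |⟨ψ_λ| (U⊗V) |jj⟩|² equals ((Σ_n √λ_n)/N)^{2N}. -/

import Mathlib

open Finset

lemma amgm_pow {N : ℕ} (hN : 0 < N) (b : Fin N → ℝ) (hb : ∀ j, 0 ≤ b j) :
    ∏ j, b j ≤ ((∑ j, b j) / N) ^ N := by
  have hNR : (0:ℝ) < N := by exact_mod_cast hN
  have key := Real.geom_mean_le_arith_mean_weighted univ (fun _ => 1 / N) b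
    (fun i _ => by positivity)
    (by simp [Finset.sum_const, Finset.card_univ, mul_one_div, mul_inv_cancel₀ hNR.ne'])
    (fun i _ => hb i)
  have hprod : ∏ j, b j ^ ((1:ℝ) / N) = (∏ j, b j) ^ ((1:ℝ) / N) :=
    Real.finset_prod_rpow univ b (fun i _ => hb i) _
  have hsum : ∑ j : Fin N, 1 / (N:ℝ) * b j = (∑ j, b j) / N := by
    rw [Finset.sum_div]; congr 1; ext j; ring
  simp only [hprod, hsum] at key
  have h2 : ((∏ j, b j) ^ ((1:ℝ)/N)) ^ N ≤ ((∑ j, b j) / N) ^ N :=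
    pow_le_pow_left₀ (Real.rpow_nonneg (Finset.prod_nonneg fun i _ => hb i) _) key N
  rwa [← Real.rpow_natCast ((∏ j, b j) ^ ((1:ℝ)/N)) N, ← Real.rpow_mul
    (Finset.prod_nonneg fun i _ => hb i), one_div, inv_mul_cancel₀ hNR.ne',
    Real.rpow_one] at h2


lemma row_norm {N : ℕ} {U : Matrix (Fin N) (Fin N) ℂ}
    (hU : U ∈ Matrix.unitaryGroup (Fin N) ℂ) (n : Fin N) :
    ∑ j, ‖U n j‖ ^ 2 = 1 := by
  have h := Matrix.mem_unitaryGroup_iff.mp hU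
  have h2 := congrFun (congrFun h n) n
  simp only [Matrix.mul_apply, Matrix.one_apply_eq, Matrix.star_apply,
    Matrix.conjTranspose_apply] at h2
  have he : ∀ j, U n j * star (U n j) = ((‖U n j‖ ^ 2 : ℝ) : ℂ) := fun j => by
    rw [RCLike.star_def, Complex.mul_conj, Complex.normSq_eq_norm_sq]
  rw [Finset.sum_congr rfl (fun j _ => he j)] at h2
  exact_mod_cast h2

lemma upper_bound {N : ℕ} (hN : 0 < N) (l : Fin N → ℝ) (hl : ∀ n, 0 ≤ l n)
    (hsum : ∑ n, l n = 1)
    {U V : Matrix (Fin N) (Fin N) ℂ}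
    (hU : U ∈ Matrix.unitaryGroup (Fin N) ℂ) (hV : V ∈ Matrix.unitaryGroup (Fin N) ℂ) :
    ∏ j : Fin N, ‖∑ n : Fin N, (Real.sqrt (l n) : ℂ) * U n j * V n j‖ ^ 2
      ≤ ((∑ n, Real.sqrt (l n)) / N) ^ (2 * N) := by
  set a : Fin N → ℝ := fun n => Real.sqrt (l n) with ha
  have ha0 : ∀ n, 0 ≤ a n := fun n => Real.sqrt_nonneg _
  set S : ℝ := ∑ n, a n with hS
  have hS0 : 0 ≤ S := Finset.sum_nonneg fun n _ => ha0 n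
  set b : Fin N → ℝ := fun j => ∑ n, a n * (‖U n j‖ * ‖V n j‖) with hb
  have hb0 : ∀ j, 0 ≤ b j := fun j =>
    Finset.sum_nonneg fun n _ => by positivity
  -- step 1 : ‖z j‖ ≤ b j
  have h1 : ∀ j, ‖∑ n : Fin N, (a n : ℂ) * U n j * V n j‖ ≤ b j := by
    intro j
    refine (norm_sum_le _ _).trans_eq ?_
    refine Finset.sum_congr rfl fun n _ => ?_
    rw [norm_mul, norm_mul, Complex.norm_real, Real.norm_of_nonneg (ha0 n), mul_assoc]
  -- step 2 : ∑ b ≤ S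
  have h2 : ∑ j, b j ≤ S := by
    rw [hb, Finset.sum_comm]
    refine Finset.sum_le_sum fun n _ => ?_
    rw [← Finset.mul_sum]
    have hcs := Finset.sum_mul_sq_le_sq_mul_sq Finset.univ
      (fun j => ‖U n j‖) (fun j => ‖V n j‖)
    rw [row_norm hU n, row_norm hV n, mul_one] at hcs
    have hnn : (0:ℝ) ≤ ∑ j, ‖U n j‖ * ‖V n j‖ :=
      Finset.sum_nonneg fun j _ => by positivity
    have hle : ∑ j, ‖U n j‖ * ‖V n j‖ ≤ 1 := by nlinarith
    calc a n * ∑ j, ‖U n j‖ * ‖V n j‖ ≤ a n * 1 :=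
          mul_le_mul_of_nonneg_left hle (ha0 n)
      _ = a n := mul_one _
  -- combine
  calc ∏ j : Fin N, ‖∑ n : Fin N, (a n : ℂ) * U n j * V n j‖ ^ 2
      ≤ ∏ j, (b j) ^ 2 := Finset.prod_le_prod (fun j _ => by positivity)
        (fun j _ => pow_le_pow_left₀ (norm_nonneg _) (h1 j) 2)
    _ = (∏ j, b j) ^ 2 := by rw [Finset.prod_pow]
    _ ≤ (((∑ j, b j) / N) ^ N) ^ 2 := pow_le_pow_left₀
        (Finset.prod_nonneg fun j _ => hb0 j) (amgm_pow hN b hb0) 2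
    _ = ((∑ j, b j) / N) ^ (2 * N) := by rw [← pow_mul, mul_comm]
    _ ≤ (S / N) ^ (2 * N) := by
        refine pow_le_pow_left₀ (by positivity) ?_ _
        have : (0:ℝ) < N := by exact_mod_cast hN
        gcongr


noncomputable def fourierM (N : ℕ) : Matrix (Fin N) (Fin N) ℂ :=
  Matrix.of fun n j => Complex.exp (2 * Real.pi * Complex.I / N) ^ ((n : ℕ) * (j : ℕ))
    / (Real.sqrt N : ℂ)

lemma fourier_orth {N : ℕ} (hN : 0 < N) (n m : Fin N) :
    ∑ j : Fin N, (Complex.exp (2 * Real.pi * Complex.I / N)) ^ (((n:ℤ) - (m:ℤ)) * j) =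
      if n = m then (N : ℂ) else 0 := by
  set ω := Complex.exp (2 * Real.pi * Complex.I / N) with hω
  have hprim : IsPrimitiveRoot ω N := Complex.isPrimitiveRoot_exp N hN.ne'
  by_cases h : n = m
  · subst h; simp
  · rw [if_neg h]
    set z : ℂ := ω ^ ((n:ℤ) - (m:ℤ)) with hz
    have hzj : ∀ j : Fin N, ω ^ (((n:ℤ) - (m:ℤ)) * j) = z ^ (j : ℕ) := by
      intro j; rw [hz, ← zpow_natCast (z) (j:ℕ), ← zpow_mul]
    rw [Finset.sum_congr rfl fun j _ => hzj j]
    have hz1 : z ≠ 1 := by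
      rw [hz, Ne, hprim.zpow_eq_one_iff_dvd]
      intro hdvd
      have h0 : (n:ℤ) - (m:ℤ) = 0 := Int.eq_zero_of_dvd_of_natAbs_lt_natAbs hdvd (by
        have h1 := n.isLt; have h2 := m.isLt; omega)
      exact h (Fin.ext (by omega))
    have hzN : z ^ N = 1 := by
      rw [hz, ← zpow_natCast (ω ^ ((n:ℤ)-(m:ℤ))) N, ← zpow_mul, mul_comm, zpow_mul,
        zpow_natCast, hprim.pow_eq_one, one_zpow]
    rw [Fin.sum_univ_eq_sum_range (fun j => z ^ j), geom_sum_eq hz1, hzN, sub_self,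
      zero_div]

lemma fourier_mem {N : ℕ} (hN : 0 < N) :
    fourierM N ∈ Matrix.unitaryGroup (Fin N) ℂ := by
  rw [Matrix.mem_unitaryGroup_iff]
  ext n m
  set ω := Complex.exp (2 * Real.pi * Complex.I / N) with hω
  have hω0 : ω ≠ 0 := Complex.exp_ne_zero _
  have hconj : (starRingEnd ℂ) ω = ω⁻¹ := by
    rw [hω, ← Complex.exp_conj, ← Complex.exp_neg]
    congr 1
    simp only [map_div₀, map_mul, Complex.conj_I, Complex.conj_ofReal, map_ofNat,
      map_natCast]
    ring
  have hNC : ((Real.sqrt N : ℂ)) * ((Real.sqrt N : ℂ)) = (N : ℂ) := by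
    rw [← Complex.ofReal_mul, Real.mul_self_sqrt (Nat.cast_nonneg N)]
    norm_num
  have hterm : ∀ j : Fin N, fourierM N n j * star (fourierM N m j)
      = ω ^ (((n:ℤ) - (m:ℤ)) * (j:ℕ)) / N := by
    intro j
    simp only [fourierM, Matrix.of_apply, star_div₀, star_pow, RCLike.star_def, ← hω, hconj,
      Complex.conj_ofReal]
    rw [div_mul_div_comm, hNC, ← zpow_natCast ω ((n:ℕ)*(j:ℕ)),
      ← zpow_natCast (ω⁻¹) ((m:ℕ)*(j:ℕ)), inv_zpow, ← zpow_neg, ← zpow_add₀ hω0]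
    congr 2
    push_cast; ring
  rw [Matrix.mul_apply]
  have : ∀ j, fourierM N n j * (star (fourierM N)) j m
      = ω ^ (((n:ℤ) - (m:ℤ)) * (j:ℕ)) / N := by
    intro j
    rw [Matrix.star_apply, hterm j]
  rw [Finset.sum_congr rfl fun j _ => this j, ← Finset.sum_div, fourier_orth hN n m]
  by_cases h : n = m
  · subst h
    rw [if_pos rfl, Matrix.one_apply_eq, div_self]
    exact_mod_cast Nat.cast_ne_zero.mpr hN.ne'
  · rw [if_neg h, Matrix.one_apply_ne h, zero_div]

lemma map_star_mem {N : ℕ} {U : Matrix (Fin N) (Fin N) ℂ}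
    (hU : U ∈ Matrix.unitaryGroup (Fin N) ℂ) :
    U.map (starRingEnd ℂ) ∈ Matrix.unitaryGroup (Fin N) ℂ := by
  rw [Matrix.mem_unitaryGroup_iff] at hU ⊢
  ext n m
  have h1 := congrFun (congrFun hU n) m
  rw [Matrix.mul_apply] at h1 ⊢
  simp only [Matrix.star_apply, Matrix.map_apply] at h1 ⊢
  have : ∑ j, (starRingEnd ℂ) (U n j) * star ((starRingEnd ℂ) (U m j))
      = (starRingEnd ℂ) (∑ j, U n j * star (U m j)) := by
    rw [map_sum]
    refine Finset.sum_congr rfl fun j _ => ?_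
    simp only [map_mul, RCLike.star_def, Complex.conj_conj]
  rw [this, h1, Matrix.one_apply, apply_ite (starRingEnd ℂ), map_one, map_zero]

open Finset in
/-- The pure-state collectibility of `|ψ_λ⟩ = Σ √λ_n |nn⟩`:
the maximum over unitaries `U, V` of `∏_j |⟨ψ_λ|(U⊗V)|jj⟩|²` equals
`((Σ_n √λ_n)/N)^{2N}`. -/
theorem pure_state_collectibility_schmidt {N : ℕ} (hN : 0 < N)
    (l : Fin N → ℝ) (hl : ∀ n, 0 ≤ l n) (hsum : ∑ n, l n = 1) :
    IsGreatest
      { y : ℝ | ∃ U ∈ Matrix.unitaryGroup (Fin N) ℂ, ∃ V ∈ Matrix.unitaryGroup (Fin N) ℂ,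
          y = ∏ j : Fin N, ‖∑ n : Fin N, (Real.sqrt (l n) : ℂ) * U n j * V n j‖ ^ 2 }
      (((∑ n, Real.sqrt (l n)) / N) ^ (2 * N)) := by
  constructor
  · -- membership : the Fourier matrix achieves the maximum
    refine ⟨fourierM N, fourier_mem hN, (fourierM N).map (starRingEnd ℂ),
      map_star_mem (fourier_mem hN), ?_⟩
    set ω := Complex.exp (2 * Real.pi * Complex.I / N) with hω
    have hω0 : ω ≠ 0 := Complex.exp_ne_zero _
    have hconj : (starRingEnd ℂ) ω = ω⁻¹ := by
      rw [hω, ← Complex.exp_conj, ← Complex.exp_neg]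
      congr 1
      simp only [map_div₀, map_mul, Complex.conj_I, Complex.conj_ofReal, map_ofNat,
        map_natCast]
      ring
    have hNC : ((Real.sqrt N : ℂ)) * ((Real.sqrt N : ℂ)) = (N : ℂ) := by
      rw [← Complex.ofReal_mul, Real.mul_self_sqrt (Nat.cast_nonneg N)]
      norm_num
    set S : ℝ := ∑ n, Real.sqrt (l n) with hS
    have hS0 : 0 ≤ S := Finset.sum_nonneg fun n _ => Real.sqrt_nonneg _
    have hNpos : (0:ℝ) < N := by exact_mod_cast hN
    have hval : ∀ j : Fin N,
        ∑ n : Fin N, (Real.sqrt (l n) : ℂ) * fourierM N n j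
          * ((fourierM N).map (starRingEnd ℂ)) n j = ((S / N : ℝ) : ℂ) := by
      intro j
      have hterm : ∀ n : Fin N, (Real.sqrt (l n) : ℂ) * fourierM N n j
          * ((fourierM N).map (starRingEnd ℂ)) n j = (Real.sqrt (l n) : ℂ) / N := by
        intro n
        simp only [fourierM, Matrix.map_apply, Matrix.of_apply, map_div₀, map_pow, ← hω, hconj,
          Complex.conj_ofReal]
        rw [mul_assoc, div_mul_div_comm, hNC, ← mul_pow, mul_inv_cancel₀ hω0, one_pow,
          mul_one_div]
      rw [Finset.sum_congr rfl fun n _ => hterm n, ← Finset.sum_div]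
      push_cast [hS]
      ring
    rw [Finset.prod_congr rfl fun j _ => by rw [hval j]]
    rw [Complex.norm_real, Real.norm_of_nonneg (by positivity), Finset.prod_const,
      Finset.card_univ, Fintype.card_fin, ← pow_mul, mul_comm]
  · -- upper bound
    rintro y ⟨U, hU, V, hV, rfl⟩
    exact upper_bound hN l hl hsum hU hV
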